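/- Let f : ℝ^n → ℝ be a nonnegative log-concave function such that the interior of P_f is nonempty. Define f̄ : ℝ^n → ℝ by f̄(x) = f(x) if x is in the interior of P_f, f̄(x) = limsup_{y → x, y ∈ int(P_f)} f(y) if x is on the boundary of P_f, and f̄(x) = 0 otherwise. Then f̄ is log-concave on ℝ^n. -/

import Mathlib

open MeasureTheory Set Filter
open scoped ENNReal Topology Classical

/-- A nonnegative function `f : ℝⁿ → ℝ` is log-concave if
`f((1−t)x + t y) ≥ f(x)^(1−t) * f(y)^t` for all `x, y` and `t ∈ [0,1]`. -/
def LogConcaveFn {n : ℕ} (f : (Fin n → ℝ) → ℝ) : Prop :=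
  ∀ x y : Fin n → ℝ, ∀ t : ℝ, t ∈ Set.Icc (0 : ℝ) 1 →
    f x ^ (1 - t) * f y ^ t ≤ f ((1 - t) • x + t • y)

/-- If `f` is nonnegative and log-concave with `P_f = {f > 0}` of nonempty interior,
then the function `f̄`, equal to `f` on the interior of `P_f`, to
`limsup_{y → x, y ∈ int P_f} f(y)` on the boundary of `P_f` and `0` elsewhere,
is log-concave. -/
theorem fbar_logConcave {n : ℕ} (f : (Fin n → ℝ) → ℝ)
    (hf0 : ∀ x, 0 ≤ f x) (hf : LogConcaveFn f)
    (hP : (interior {x : Fin n → ℝ | 0 < f x}).Nonempty) :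
    LogConcaveFn (fun x =>
      if x ∈ interior {y : Fin n → ℝ | 0 < f y} then f x
      else if x ∈ frontier {y : Fin n → ℝ | 0 < f y} then
        Filter.limsup f (𝓝[interior {y : Fin n → ℝ | 0 < f y}] x)
      else 0) := by
  set P : Set (Fin n → ℝ) := {y : Fin n → ℝ | 0 < f y} with hPdef
  set U : Set (Fin n → ℝ) := interior P with hUdef
  set F : (Fin n → ℝ) → ℝ := fun x =>
    if x ∈ U then f x else if x ∈ frontier P then Filter.limsup f (𝓝[U] x) else 0 with hFdef
  -- basic facts
  have hUopen : IsOpen U := isOpen_interior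
  have hfposU : ∀ u ∈ U, 0 < f u := by
    intro u hu
    have : u ∈ P := interior_subset hu
    exact this
  have hPconv : Convex ℝ P := by
    intro a ha b hb s r hs hr hsr
    have h := hf a b r ⟨hr, by linarith⟩
    have h1 : (1 : ℝ) - r = s := by linarith
    rw [h1] at h
    have : (0 : ℝ) < f a ^ s * f b ^ r :=
      mul_pos (Real.rpow_pos_of_pos ha _) (Real.rpow_pos_of_pos hb _)
    exact lt_of_lt_of_le this h
  have hUconv : Convex ℝ U := hPconv.interior
  -- log f is concave on U, hence f is continuous on U
  have hlogconc : ConcaveOn ℝ U fun u => Real.log (f u) := by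
    refine ⟨hUconv, fun a ha b hb s r hs hr hsr => ?_⟩
    have h := hf a b r ⟨hr, by linarith⟩
    have h1 : (1 : ℝ) - r = s := by linarith
    rw [h1] at h
    have hfa := hfposU a ha
    have hfb := hfposU b hb
    have hmem : s • a + r • b ∈ U := hUconv ha hb hs hr hsr
    have hprodpos : (0 : ℝ) < f a ^ s * f b ^ r :=
      mul_pos (Real.rpow_pos_of_pos hfa _) (Real.rpow_pos_of_pos hfb _)
    have hlog := Real.log_le_log hprodpos h
    rw [Real.log_mul (ne_of_gt (Real.rpow_pos_of_pos hfa _))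
        (ne_of_gt (Real.rpow_pos_of_pos hfb _)), Real.log_rpow hfa, Real.log_rpow hfb] at hlog
    simpa [smul_eq_mul] using hlog
  have hcont : ContinuousOn f U := by
    have h1 : ContinuousOn (fun u => Real.exp (Real.log (f u))) U :=
      Real.continuous_exp.comp_continuousOn (hlogconc.continuousOn hUopen)
    exact h1.congr fun u hu => (Real.exp_log (hfposU u hu)).symm
  -- closure P ⊆ closure U
  obtain ⟨p, hp⟩ := hP
  have hclP_clU : closure P ⊆ closure U := by
    intro x hx
    have htend : Filter.Tendsto (fun s : ℝ => x + s • (p - x)) (𝓝[>] (0 : ℝ)) (𝓝 x) := by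
      have hc : Continuous fun s : ℝ => x + s • (p - x) :=
        continuous_const.add (continuous_id.smul continuous_const)
      have h2 := hc.tendsto 0
      simp only [zero_smul, add_zero] at h2
      exact h2.mono_left nhdsWithin_le_nhds
    have hev : ∀ᶠ s : ℝ in 𝓝[>] (0 : ℝ), x + s • (p - x) ∈ U := by
      filter_upwards [Ioo_mem_nhdsGT_of_mem (by norm_num : (0:ℝ) ∈ Ico (0:ℝ) 1)] with s hs
      exact hPconv.add_smul_sub_mem_interior' hx hp ⟨hs.1, hs.2.le⟩
    exact mem_closure_of_tendsto htend hev
  have hcl_cases : ∀ x, x ∈ closure U → x ∈ U ∨ x ∈ frontier P := by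
    intro x hx
    have : x ∈ closure P := closure_mono interior_subset hx
    rw [closure_eq_interior_union_frontier] at this
    exact this
  -- nonnegativity of F
  have hF0 : ∀ x, 0 ≤ F x := by
    intro x
    rw [hFdef]
    by_cases hx : x ∈ U
    · simpa [hx] using hf0 x
    by_cases hx' : x ∈ frontier P
    · simp only [hx, hx', if_false, if_true]
      have hne : (𝓝[U] x).NeBot := by
        rw [← mem_closure_iff_nhdsWithin_neBot]
        exact hclP_clU (frontier_subset_closure hx')
      rw [Filter.limsup_eq]
      refine Real.le_sInf (fun a ha => ?_) le_rfl
      rw [Set.mem_setOf_eq] at ha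
      obtain ⟨w, hw⟩ := (ha.and_frequently
        (Filter.Frequently.of_forall fun w => hf0 w)).exists
      exact le_trans hw.2 hw.1
    · simp [hx, hx']
  -- F agrees with values on U / frontier
  have hFU : ∀ x ∈ U, F x = f x := fun x hx => by simp [hFdef, hx]
  have hFfr : ∀ x, x ∉ U → x ∈ frontier P → F x = Filter.limsup f (𝓝[U] x) :=
    fun x hx hx' => by simp [hFdef, hx, hx']
  -- F positive implies x ∈ closure U
  have hFpos_cl : ∀ x, 0 < F x → x ∈ closure U := by
    intro x hx
    by_cases h1 : x ∈ U
    · exact subset_closure h1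
    by_cases h2 : x ∈ frontier P
    · exact hclP_clU (frontier_subset_closure h2)
    · simp [hFdef, h1, h2] at hx
  -- Lemma A: frequently f > c near points where F > 0
  have hauxA : ∀ x, 0 < F x → ∀ c, c < F x → ∃ᶠ w in 𝓝[U] x, c < f w := by
    intro x hFx c hc
    have hne : (𝓝[U] x).NeBot := by
      rw [← mem_closure_iff_nhdsWithin_neBot]; exact hFpos_cl x hFx
    by_cases hx : x ∈ U
    · rw [hFU x hx] at hc
      have hca : ContinuousAt f x := hcont.continuousAt (hUopen.mem_nhds hx)
      have hev : ∀ᶠ w in 𝓝 x, c < f w := hca.eventually (eventually_gt_nhds hc)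
      exact (hev.filter_mono nhdsWithin_le_nhds).frequently
    · have hx' : x ∈ frontier P := by
        rcases hcl_cases x (hFpos_cl x hFx) with h | h
        · exact absurd h hx
        · exact h
      rw [hFfr x hx hx'] at hc
      have hcob : Filter.IsCoboundedUnder (· ≤ ·) (𝓝[U] x) f :=
        isCoboundedUnder_le_of_eventually_le _ (Filter.Eventually.of_forall fun w => hf0 w)
      exact Filter.frequently_lt_of_lt_limsup hcob hc
  -- boundedness of f near any point of closure U
  have hbdd : ∀ z ∈ closure U, Filter.IsBoundedUnder (· ≤ ·) (𝓝[U] z) f := by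
    intro z hz
    obtain ⟨ε, hε, hball⟩ := Metric.isOpen_iff.mp hUopen p hp
    set δ : ℝ := ε / 2 with hδdef
    have hδ : 0 < δ := by positivity
    have hcb : Metric.closedBall p δ ⊆ U :=
      (Metric.closedBall_subset_ball (by simp [hδdef]; linarith)).trans hball
    obtain ⟨v₀, hv₀mem, hv₀min⟩ :=
      (isCompact_closedBall p δ).exists_isMinOn ⟨p, Metric.mem_closedBall_self hδ.le⟩
        (hcont.mono hcb)
    set m : ℝ := f v₀ with hmdef
    have hm0 : 0 < m := hfposU v₀ (hcb hv₀mem)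
    set w : (Fin n → ℝ) := (1/2 : ℝ) • z + (1/2 : ℝ) • p with hwdef
    have hwU : w ∈ U :=
      hPconv.combo_closure_interior_mem_interior (closure_mono interior_subset hz) hp
        (by norm_num) (by norm_num) (by norm_num)
    refine ⟨(f w / Real.sqrt m) ^ 2, ?_⟩
    have hball' : Metric.ball z δ ∈ 𝓝[U] z := nhdsWithin_le_nhds (Metric.ball_mem_nhds z hδ)
    have hev : ∀ᶠ u in 𝓝[U] z, u ∈ Metric.ball z δ := Filter.eventually_mem_set.mpr hball'
    rw [Filter.eventually_map]
    filter_upwards [hev] with u hu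
    -- v := z + p - u
    set v : (Fin n → ℝ) := z + p - u with hvdef
    have hvball : v ∈ Metric.closedBall p δ := by
      have : dist v p = dist z u := by
        rw [hvdef, dist_eq_norm, dist_eq_norm]
        congr 1
        abel
      rw [Metric.mem_closedBall, this]
      have := Metric.mem_ball.mp hu
      rw [dist_comm] at this
      linarith
    have hvm : m ≤ f v := hv₀min hvball
    have hmid : (1 - (1/2 : ℝ)) • u + (1/2 : ℝ) • v = w := by
      rw [hvdef, hwdef]
      have h2 : (1 : ℝ) - 1/2 = 1/2 := by norm_num
      rw [h2, smul_sub, smul_add]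
      abel
    have hkey : f u ^ (1/2 : ℝ) * f v ^ (1/2 : ℝ) ≤ f w := by
      have h := hf u v (1/2) ⟨by norm_num, by norm_num⟩
      rw [hmid] at h
      have e : (1 : ℝ) - 1/2 = 1/2 := by norm_num
      rw [e] at h
      exact h
    rw [← Real.sqrt_eq_rpow, ← Real.sqrt_eq_rpow] at hkey
    have hsm : Real.sqrt m ≤ Real.sqrt (f v) := Real.sqrt_le_sqrt hvm
    have hsm0 : 0 < Real.sqrt m := Real.sqrt_pos.mpr hm0
    have h1 : Real.sqrt (f u) * Real.sqrt m ≤ f w := by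
      calc Real.sqrt (f u) * Real.sqrt m ≤ Real.sqrt (f u) * Real.sqrt (f v) :=
            mul_le_mul_of_nonneg_left hsm (Real.sqrt_nonneg _)
        _ ≤ f w := hkey
    have h2 : Real.sqrt (f u) ≤ f w / Real.sqrt m := by
      rw [le_div_iff₀ hsm0]; exact h1
    calc f u = Real.sqrt (f u) ^ 2 := (Real.sq_sqrt (hf0 u)).symm
      _ ≤ (f w / Real.sqrt m) ^ 2 := by
          apply pow_le_pow_left₀ (Real.sqrt_nonneg _) h2
  -- Lemma B: frequently f ≥ c near z implies c ≤ F z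
  have hauxB : ∀ z ∈ closure U, ∀ c : ℝ, (∃ᶠ w in 𝓝[U] z, c ≤ f w) → c ≤ F z := by
    intro z hz c hfreq
    by_cases hzU : z ∈ U
    · rw [hFU z hzU]
      by_contra hlt
      push_neg at hlt
      have hca : ContinuousAt f z := hcont.continuousAt (hUopen.mem_nhds hzU)
      have hev : ∀ᶠ w in 𝓝 z, f w < c := hca.eventually (eventually_lt_nhds hlt)
      exact (hfreq.and_eventually (hev.filter_mono nhdsWithin_le_nhds)).exists.elim
        fun w hw => absurd hw.1 (not_le.mpr hw.2)
    · have hzfr : z ∈ frontier P := by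
        rcases hcl_cases z hz with h | h
        · exact absurd h hzU
        · exact h
      rw [hFfr z hzU hzfr]
      exact Filter.le_limsup_of_frequently_le hfreq (hbdd z hz)
  -- main proof
  intro x y t ht
  obtain ⟨ht0, ht1⟩ := ht
  rcases eq_or_lt_of_le ht0 with h0 | h0
  · rw [← h0]; simp [Real.rpow_zero, Real.rpow_one]
  rcases eq_or_lt_of_le ht1 with h1 | h1
  · rw [h1]; simp [Real.rpow_zero, Real.rpow_one]
  -- now 0 < t < 1
  rcases le_or_gt (F x) 0 with hFx | hFx
  · have hFx0 : F x = 0 := le_antisymm hFx (hF0 x)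
    rw [hFx0, Real.zero_rpow (by linarith : (1:ℝ) - t ≠ 0), zero_mul]
    exact hF0 _
  rcases le_or_gt (F y) 0 with hFy | hFy
  · have hFy0 : F y = 0 := le_antisymm hFy (hF0 y)
    rw [hFy0, Real.zero_rpow (ne_of_gt h0), mul_zero]
    exact hF0 _
  -- both positive
  have hxcl : x ∈ closure U := hFpos_cl x hFx
  have hycl : y ∈ closure U := hFpos_cl y hFy
  set z : (Fin n → ℝ) := (1 - t) • x + t • y with hzdef
  have hzcl : z ∈ closure U :=
    hUconv.closure hxcl hycl (by linarith) (by linarith) (by ring)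
  set L : ℝ := F x ^ (1 - t) * F y ^ t with hLdef
  have hLpos : 0 < L :=
    mul_pos (Real.rpow_pos_of_pos hFx _) (Real.rpow_pos_of_pos hFy _)
  show L ≤ F z
  by_contra hcon
  push_neg at hcon
  set c : ℝ := (F z + L) / 2 with hcdef
  have hc1 : F z < c := by rw [hcdef]; linarith
  have hc2 : c < L := by rw [hcdef]; linarith
  have hc0 : 0 < c := by
    have := hF0 z
    rw [hcdef]; linarith
  set s : ℝ := c / L with hsdef
  have hs0 : 0 < s := div_pos hc0 hLpos
  have hs1 : s < 1 := (div_lt_one hLpos).mpr hc2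
  -- a and b
  set a : ℝ := s * F x with hadef
  set b : ℝ := s * F y with hbdef
  have ha0 : 0 < a := mul_pos hs0 hFx
  have hb0 : 0 < b := mul_pos hs0 hFy
  have haFx : a < F x := by
    rw [hadef]; nlinarith
  have hbFy : b < F y := by
    rw [hbdef]; nlinarith
  have habc : a ^ (1 - t) * b ^ t = c := by
    have h1 : a ^ (1 - t) * b ^ t = s * L := by
      rw [hadef, hbdef, Real.mul_rpow hs0.le (hF0 x), Real.mul_rpow hs0.le (hF0 y), hLdef]
      rw [show s ^ (1 - t) * F x ^ (1 - t) * (s ^ t * F y ^ t)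
          = s ^ (1 - t) * s ^ t * (F x ^ (1 - t) * F y ^ t) from by ring]
      rw [← Real.rpow_add hs0]
      norm_num
    rw [h1, hsdef, div_mul_cancel₀ _ (ne_of_gt hLpos)]
  -- frequently c ≤ f near z
  have hfreqx := (hauxA x hFx a haFx).and_eventually eventually_mem_nhdsWithin
  have hfreqy := (hauxA y hFy b hbFy).and_eventually eventually_mem_nhdsWithin
  have hfreqz : ∃ᶠ w in 𝓝[U] z, c ≤ f w := by
    rw [Filter.frequently_iff]
    intro W hW
    obtain ⟨O, hOopen, hzO, hOW⟩ := mem_nhdsWithin.mp hW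
    have hmcont : Continuous fun q : (Fin n → ℝ) × (Fin n → ℝ) =>
        (1 - t) • q.1 + t • q.2 :=
      by fun_prop
    have hpre : (fun q : (Fin n → ℝ) × (Fin n → ℝ) => (1 - t) • q.1 + t • q.2) ⁻¹' O
        ∈ 𝓝 (x, y) := by
      apply hmcont.continuousAt.preimage_mem_nhds
      have heq : ((1 - t) • (x, y).1 + t • (x, y).2 : Fin n → ℝ) = z := by
        simp [hzdef]
      rw [heq]
      exact hOopen.mem_nhds hzO
    rw [nhds_prod_eq, Filter.mem_prod_iff] at hpre
    obtain ⟨A, hA, B, hB, hAB⟩ := hpre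
    obtain ⟨x', hx'A, hx'f, hx'U⟩ :=
      (Filter.frequently_iff.mp hfreqx (nhdsWithin_le_nhds hA) : ∃ x' ∈ A, a < f x' ∧ x' ∈ U)
    obtain ⟨y', hy'B, hy'f, hy'U⟩ :=
      (Filter.frequently_iff.mp hfreqy (nhdsWithin_le_nhds hB) : ∃ y' ∈ B, b < f y' ∧ y' ∈ U)
    refine ⟨(1 - t) • x' + t • y', ?_, ?_⟩
    · apply hOW
      constructor
      · exact hAB (Set.mk_mem_prod hx'A hy'B)
      · exact hUconv hx'U hy'U (by linarith) (by linarith) (by ring)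
    · have h := hf x' y' t ⟨ht0, ht1⟩
      have hab : a ^ (1 - t) * b ^ t ≤ f x' ^ (1 - t) * f y' ^ t := by
        apply mul_le_mul
        · exact Real.rpow_le_rpow ha0.le hx'f.le (by linarith)
        · exact Real.rpow_le_rpow hb0.le hy'f.le h0.le
        · exact Real.rpow_nonneg hb0.le _
        · exact Real.rpow_nonneg (hf0 x') _
      rw [habc] at hab
      exact hab.trans h
  exact absurd (hauxB z hzcl c hfreqz) (not_le.mpr hc1)
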